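/- arXiv:1010.2167 — 3 statements merged into one kernel-verified Lean document; each statement's English description precedes it below -/
import Mathlib

section
/- The graph Cay(ℤ₁₃;1,5) contains no clique of size 3 and no independent set of size 5. -/
/-- The Cayley graph of `ℤ₁₃` with connection set `{±1, ±5}`. -/
def cayZ13 : SimpleGraph (ZMod 13) where
  Adj i j := j - i = 1 ∨ j - i = 5 ∨ j - i = 8 ∨ j - i = 12
  symm := by
    constructor
    intro i j h
    have e : i - j = -(j - i) := by ring
    rcases h with h | h | h | h <;> rw [h] at e <;> rw [e] <;> decide
  loopless := by
    constructor
    intro i h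
    rw [sub_self] at h
    revert h
    decide

instance : DecidableRel cayZ13.Adj := fun i j =>
  inferInstanceAs (Decidable (_ ∨ _ ∨ _ ∨ _))

instance : DecidableRel cayZ13ᶜ.Adj := fun i j =>
  inferInstanceAs (Decidable (_ ∧ _))

instance (n : ℕ) : Decidable (cayZ13.CliqueFree n) :=
  inferInstanceAs (Decidable (∀ t, ¬cayZ13.IsNClique n t))

instance (n : ℕ) : Decidable (cayZ13ᶜ.CliqueFree n) :=
  inferInstanceAs (Decidable (∀ t, ¬cayZ13ᶜ.IsNClique n t))

lemma key3 : ∀ a b c : ZMod 13,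
    ¬(cayZ13.Adj a b ∧ cayZ13.Adj a c ∧ cayZ13.Adj b c) := by decide

set_option maxRecDepth 8000 in
set_option maxHeartbeats 4000000 in
lemma key5' : ∀ b c d e : ZMod 13,
    cayZ13ᶜ.Adj 0 b → cayZ13ᶜ.Adj 0 c → cayZ13ᶜ.Adj 0 d → cayZ13ᶜ.Adj 0 e →
    cayZ13ᶜ.Adj b c → cayZ13ᶜ.Adj b d → cayZ13ᶜ.Adj b e →
    cayZ13ᶜ.Adj c d → cayZ13ᶜ.Adj c e → cayZ13ᶜ.Adj d e → False := by decide

lemma compl_adj_sub (a x y : ZMod 13) (h : cayZ13ᶜ.Adj x y) :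
    cayZ13ᶜ.Adj (x - a) (y - a) := by
  obtain ⟨hne, hadj⟩ := h
  refine ⟨by intro h; exact hne (by linear_combination h), ?_⟩
  intro h
  apply hadj
  simpa [cayZ13, sub_sub_sub_cancel_right] using h

lemma key5 : ∀ a b c d e : ZMod 13,
    ¬(cayZ13ᶜ.Adj a b ∧ cayZ13ᶜ.Adj a c ∧ cayZ13ᶜ.Adj a d ∧ cayZ13ᶜ.Adj a e ∧
      cayZ13ᶜ.Adj b c ∧ cayZ13ᶜ.Adj b d ∧ cayZ13ᶜ.Adj b e ∧
      cayZ13ᶜ.Adj c d ∧ cayZ13ᶜ.Adj c e ∧ cayZ13ᶜ.Adj d e) := by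
  intro a b c d e ⟨h1, h2, h3, h4, h5, h6, h7, h8, h9, h10⟩
  have s : a - a = 0 := sub_self a
  exact key5' (b - a) (c - a) (d - a) (e - a)
    (s ▸ compl_adj_sub a a b h1) (s ▸ compl_adj_sub a a c h2)
    (s ▸ compl_adj_sub a a d h3) (s ▸ compl_adj_sub a a e h4)
    (compl_adj_sub a b c h5) (compl_adj_sub a b d h6) (compl_adj_sub a b e h7)
    (compl_adj_sub a c d h8) (compl_adj_sub a c e h9) (compl_adj_sub a d e h10)

/-- `Cay(ℤ₁₃; 1, 5)` contains no clique of size `3` and no independent set of size `5`. -/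
theorem cayZ13_no_3clique_no_5indep :
    cayZ13.CliqueFree 3 ∧ cayZ13ᶜ.CliqueFree 5 := by
  constructor
  · rw [SimpleGraph.cliqueFree_iff]
    constructor
    intro f
    exact key3 (f 0) (f 1) (f 2)
      ⟨f.toHom.map_adj (by decide), f.toHom.map_adj (by decide), f.toHom.map_adj (by decide)⟩
  · rw [SimpleGraph.cliqueFree_iff]
    constructor
    intro f
    exact key5 (f 0) (f 1) (f 2) (f 3) (f 4)
      ⟨f.toHom.map_adj (by decide), f.toHom.map_adj (by decide), f.toHom.map_adj (by decide),
       f.toHom.map_adj (by decide), f.toHom.map_adj (by decide), f.toHom.map_adj (by decide),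
       f.toHom.map_adj (by decide), f.toHom.map_adj (by decide), f.toHom.map_adj (by decide),
       f.toHom.map_adj (by decide)⟩
end

section
/- Let G₁ be a simple graph on vertex set V₁ with no clique of size k₁ + 1 and no independent set of size l₁ + 1, and let G₂ be a simple graph on vertex set V₂ with no clique of size k₂ + 1 and no independent set of size l₂ + 1. Define the lexicographic product G₁[G₂] on vertex set V₁ × V₂ by making (u₁,u₂) and (v₁,v₂) adjacent if and only if u₁ is adjacent to v₁ in G₁, or u₁ = v₁ and u₂ is adjacent to v₂ in G₂. Then G₁[G₂] has no clique of size k₁·k₂ + 1 and no independent set of size l₁·l₂ + 1. -/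
/-- The lexicographic product `G₁[G₂]` of two simple graphs: `(u₁, u₂)` and `(v₁, v₂)`
are adjacent iff `u₁ ~ v₁` in `G₁`, or `u₁ = v₁` and `u₂ ~ v₂` in `G₂`. -/
def lexProd {V₁ V₂ : Type*} (G₁ : SimpleGraph V₁) (G₂ : SimpleGraph V₂) :
    SimpleGraph (V₁ × V₂) where
  Adj u v := G₁.Adj u.1 v.1 ∨ (u.1 = v.1 ∧ G₂.Adj u.2 v.2)
  symm := by
    constructor
    rintro u v (h | ⟨h1, h2⟩)
    · exact Or.inl h.symm
    · exact Or.inr ⟨h1.symm, h2.symm⟩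
  loopless := by
    constructor
    rintro u (h | ⟨-, h⟩)
    · exact G₁.loopless.irrefl _ h
    · exact G₂.loopless.irrefl _ h

lemma cliqueFree_card_le {V : Type*} {G : SimpleGraph V} {k : ℕ}
    (h : G.CliqueFree (k + 1)) {s : Finset V} (hs : G.IsClique s) : s.card ≤ k := by
  by_contra hc
  push_neg at hc
  obtain ⟨t, hts, htc⟩ := Finset.exists_subset_card_eq hc
  exact h t ⟨hs.subset hts, htc⟩

lemma lexProd_cliqueFree {V₁ V₂ : Type*} (G₁ : SimpleGraph V₁) (G₂ : SimpleGraph V₂)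
    (k₁ k₂ : ℕ) (h₁ : G₁.CliqueFree (k₁ + 1)) (h₂ : G₂.CliqueFree (k₂ + 1)) :
    (lexProd G₁ G₂).CliqueFree (k₁ * k₂ + 1) := by
  classical
  intro s hs
  obtain ⟨hc, hcard⟩ := hs
  set t : Finset V₁ := s.image Prod.fst with ht
  have htc : G₁.IsClique t := by
    intro a ha b hb hab
    obtain ⟨⟨a1, a2⟩, has, rfl⟩ := Finset.mem_image.mp ha
    obtain ⟨⟨b1, b2⟩, hbs, rfl⟩ := Finset.mem_image.mp hb
    have hne : (a1, a2) ≠ (b1, b2) := fun h => hab (congrArg Prod.fst h)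
    rcases hc has hbs hne with h | ⟨h, -⟩
    · exact h
    · exact absurd h hab
  have htcard : t.card ≤ k₁ := cliqueFree_card_le h₁ htc
  have hfiber : ∀ a ∈ t, (s.filter (fun p : V₁ × V₂ => p.1 = a)).card ≤ k₂ := by
    intro a _
    set f := s.filter (fun p : V₁ × V₂ => p.1 = a) with hf
    have himg : G₂.IsClique (f.image Prod.snd) := by
      intro x hx y hy hxy
      obtain ⟨⟨x1, x2⟩, hxs, rfl⟩ := Finset.mem_image.mp hx
      obtain ⟨⟨y1, y2⟩, hys, rfl⟩ := Finset.mem_image.mp hy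
      obtain ⟨hxs, hx1⟩ := Finset.mem_filter.mp hxs
      obtain ⟨hys, hy1⟩ := Finset.mem_filter.mp hys
      have hne : (x1, x2) ≠ (y1, y2) := fun h => hxy (congrArg Prod.snd h)
      rcases hc hxs hys hne with h | ⟨-, h⟩
      · rw [hx1, hy1] at h; exact absurd h (G₁.loopless.irrefl a)
      · exact h
    have hinj : f.card = (f.image Prod.snd).card := by
      rw [Finset.card_image_of_injOn]
      intro p hp q hq hpq
      obtain ⟨-, hp1⟩ := Finset.mem_filter.mp hp
      obtain ⟨-, hq1⟩ := Finset.mem_filter.mp hq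
      exact Prod.ext (hp1.trans hq1.symm) hpq
    rw [hinj]
    exact cliqueFree_card_le h₂ himg
  have hsum : s.card = ∑ a ∈ t, (s.filter (fun p : V₁ × V₂ => p.1 = a)).card :=
    Finset.card_eq_sum_card_fiberwise (fun p hp => Finset.mem_image_of_mem _ hp)
  have : s.card ≤ k₁ * k₂ := by
    rw [hsum]
    calc ∑ a ∈ t, (s.filter (fun p : V₁ × V₂ => p.1 = a)).card ≤ ∑ _a ∈ t, k₂ :=
          Finset.sum_le_sum hfiber
      _ = t.card * k₂ := by rw [Finset.sum_const, smul_eq_mul]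
      _ ≤ k₁ * k₂ := Nat.mul_le_mul_right _ htcard
  omega

lemma lexProd_compl {V₁ V₂ : Type*} (G₁ : SimpleGraph V₁) (G₂ : SimpleGraph V₂) :
    (lexProd G₁ G₂)ᶜ = lexProd G₁ᶜ G₂ᶜ := by
  ext ⟨u1, u2⟩ ⟨v1, v2⟩
  show ((u1, u2) ≠ (v1, v2) ∧ ¬(G₁.Adj u1 v1 ∨ (u1 = v1 ∧ G₂.Adj u2 v2))) ↔
    ((u1 ≠ v1 ∧ ¬G₁.Adj u1 v1) ∨ (u1 = v1 ∧ (u2 ≠ v2 ∧ ¬G₂.Adj u2 v2)))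
  constructor
  · rintro ⟨hne, h⟩
    push_neg at h
    obtain ⟨h1, h2⟩ := h
    by_cases heq : u1 = v1
    · subst heq
      exact Or.inr ⟨rfl, fun h' => hne (Prod.ext rfl h'), h2 rfl⟩
    · exact Or.inl ⟨heq, h1⟩
  · rintro (⟨hne, h1⟩ | ⟨heq, hne2, h2⟩)
    · exact ⟨fun h => hne (congrArg Prod.fst h),
        fun h => h.elim h1 (fun h' => hne h'.1)⟩
    · subst heq
      exact ⟨fun h => hne2 (congrArg Prod.snd h),
        fun h => h.elim (G₁.loopless.irrefl u1) (fun h' => h2 h'.2)⟩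

/-- If `G₁` has no clique of size `k₁ + 1` and no independent set of size `l₁ + 1`, and
`G₂` has no clique of size `k₂ + 1` and no independent set of size `l₂ + 1`, then the
lexicographic product `G₁[G₂]` has no clique of size `k₁k₂ + 1` and no independent set
of size `l₁l₂ + 1`. -/
theorem lexProd_cliqueFree_indepFree {V₁ V₂ : Type*} [Fintype V₁] [Fintype V₂]
    (G₁ : SimpleGraph V₁) (G₂ : SimpleGraph V₂) (k₁ l₁ k₂ l₂ : ℕ)
    (h₁k : G₁.CliqueFree (k₁ + 1)) (h₁l : G₁ᶜ.CliqueFree (l₁ + 1))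
    (h₂k : G₂.CliqueFree (k₂ + 1)) (h₂l : G₂ᶜ.CliqueFree (l₂ + 1)) :
    (lexProd G₁ G₂).CliqueFree (k₁ * k₂ + 1) ∧
      (lexProd G₁ G₂)ᶜ.CliqueFree (l₁ * l₂ + 1) := by
  refine ⟨lexProd_cliqueFree G₁ G₂ k₁ k₂ h₁k h₂k, ?_⟩
  rw [lexProd_compl]
  exact lexProd_cliqueFree G₁ᶜ G₂ᶜ l₁ l₂ h₁l h₂l
end

section
/- Every simple graph with more than 13 vertices contains either a clique of size 5 or an independent set of size 3. Consequently, 13 is the largest possible number of segments in a (4,2)-arrangement. -/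
noncomputable section

/-- The Euclidean plane. -/
abbrev Plane : Type := EuclideanSpace ℝ (Fin 2)

/-- A nondegenerate closed straight-line segment in the plane,
given by its two (distinct) endpoints. -/
structure Seg : Type where
  a : Plane
  b : Plane
  ne : a ≠ b

/-- The set of points of a segment. -/
def Seg.carrier (s : Seg) : Set Plane := segment ℝ s.a s.b

/-- Two segments cross if they have a common point; otherwise they are disjoint. -/
def Seg.Crosses (s t : Seg) : Prop := (s.carrier ∩ t.carrier).Nonempty

/-- The set of endpoints of the segments of a finite family. -/
def segEndpoints (M : Finset Seg) : Set Plane := {p | ∃ s ∈ M, p = s.a ∨ p = s.b}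

/-- A finite set of segments is an arrangement if it is in general position,
i.e. no three of the endpoints are collinear. -/
def IsArrangement (M : Finset Seg) : Prop :=
  ∀ p ∈ segEndpoints M, ∀ q ∈ segEndpoints M, ∀ r ∈ segEndpoints M,
    p ≠ q → p ≠ r → q ≠ r → ¬ Collinear ℝ ({p, q, r} : Set Plane)

/-- A `(k,l)`-arrangement: an arrangement with at most `k` pairwise crossing and
at most `l` pairwise disjoint segments. -/
def IsKLArrangement (M : Finset Seg) (k l : ℕ) : Prop :=
  IsArrangement M ∧
  (∀ S ⊆ M, (∀ s ∈ S, ∀ t ∈ S, s ≠ t → s.Crosses t) → S.card ≤ k) ∧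
  (∀ S ⊆ M, (∀ s ∈ S, ∀ t ∈ S, s ≠ t → ¬ s.Crosses t) → S.card ≤ l)

/-- The intersection graph of an arrangement of segments. -/
def interGraph (M : Finset Seg) : SimpleGraph {s : Seg // s ∈ M} where
  Adj s t := s ≠ t ∧ s.1.Crosses t.1
  symm := by
    constructor
    rintro s t ⟨hne, p, hp⟩
    exact ⟨hne.symm, p, hp.2, hp.1⟩
  loopless := by
    constructor
    rintro s ⟨hne, -⟩
    exact hne rfl

/-- An arrangement `M` is flattenable if for every `ε > 0` there is an arrangement
with the same intersection graph whose segments all have one endpoint in a disc of radius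
`ε` around `c₁` and the other endpoint in a disc of radius `ε` around `c₂`, where
`c₁`, `c₂` are at distance `1`. -/
def Flattenable (M : Finset Seg) : Prop :=
  ∀ ε : ℝ, 0 < ε → ∃ (M' : Finset Seg) (c₁ c₂ : Plane),
    IsArrangement M' ∧ Nonempty (interGraph M' ≃g interGraph M) ∧
    dist c₁ c₂ = 1 ∧
    ∀ s ∈ M', (dist s.a c₁ ≤ ε ∧ dist s.b c₂ ≤ ε) ∨
              (dist s.b c₁ ≤ ε ∧ dist s.a c₂ ≤ ε)



open Finset

section Ramsey

variable {V : Type} [Fintype V]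

private def IndepBdd (H : SimpleGraph V) (k : ℕ) (W : Finset V) : Prop :=
  ∀ S ⊆ W, Hᶜ.IsClique ↑S → S.card ≤ k

private lemma deg_le {H : SimpleGraph V} (h3 : H.CliqueFree 3) {k : ℕ} {W : Finset V}
    (hW : IndepBdd H k W) (v : V) [DecidablePred (H.Adj v)] :
    (W.filter (H.Adj v)).card ≤ k := by
  classical
  apply hW _ (filter_subset _ _)
  intro a ha b hb hab
  simp only [coe_filter, Set.mem_setOf_eq] at ha hb
  refine ⟨hab, fun hadj => ?_⟩
  exact h3 {v, a, b} (SimpleGraph.is3Clique_triple_iff.2 ⟨ha.2, hb.2, hadj⟩)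

private lemma indepBdd_nonnbr {H : SimpleGraph V} {k : ℕ} {W : Finset V}
    (hW : IndepBdd H (k + 1) W) {v : V} (hv : v ∈ W)
    [DecidablePred fun u => u ≠ v ∧ ¬H.Adj v u] :
    IndepBdd H k (W.filter fun u => u ≠ v ∧ ¬H.Adj v u) := by
  classical
  intro S hS hSclique
  have hvS : v ∉ S := fun h => (mem_filter.1 (hS h)).2.1 rfl
  have hins : (insert v S).card ≤ k + 1 := by
    apply hW
    · intro x hx
      rcases mem_insert.1 hx with rfl | hx
      · exact hv
      · exact (mem_filter.1 (hS hx)).1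
    · rw [coe_insert]
      apply hSclique.insert
      intro b hb hbv
      have hbm := (mem_filter.1 (hS hb)).2
      exact ⟨hbv, fun h => hbm.2 h⟩
  rw [card_insert_of_notMem hvS] at hins
  omega

private lemma card_split {H : SimpleGraph V} [DecidableRel H.Adj] [DecidableEq V]
    {W : Finset V} {v : V} (hv : v ∈ W) :
    W.card = 1 + (W.filter (H.Adj v)).card + (W.filter fun u => u ≠ v ∧ ¬H.Adj v u).card := by
  have h1 : W.filter (fun u => ¬(u ≠ v ∧ ¬H.Adj v u)) = insert v (W.filter (H.Adj v)) := by
    ext u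
    simp only [mem_filter, mem_insert, ne_eq, not_and, not_not]
    constructor
    · rintro ⟨hu, h⟩
      by_cases huv : u = v
      · exact Or.inl huv
      · exact Or.inr ⟨hu, h huv⟩
    · rintro (rfl | ⟨hu, h⟩)
      · exact ⟨hv, fun h => absurd rfl h⟩
      · exact ⟨hu, fun _ => h⟩
  have h2 := Finset.card_filter_add_card_filter_not
    (s := W) (p := fun u => u ≠ v ∧ ¬H.Adj v u)
  rw [h1, card_insert_of_notMem (by simp)] at h2
  omega

private lemma bound1 {H : SimpleGraph V} (h3 : H.CliqueFree 3) {W : Finset V}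
    (hW : IndepBdd H 1 W) : W.card ≤ 2 := by
  classical
  by_contra h
  push_neg at h
  have hclique : H.IsClique ↑W := by
    intro a ha b hb hab
    by_contra hadj
    have h2 : ({a, b} : Finset V).card ≤ 1 := by
      apply hW
      · intro x hx
        rcases mem_insert.1 hx with rfl | hx
        · exact ha
        · rw [mem_singleton.1 hx]; exact hb
      · rw [coe_insert, coe_singleton]
        exact SimpleGraph.isClique_pair.2 fun _ => ⟨hab, hadj⟩
    rw [card_insert_of_notMem (by simp [hab]), card_singleton] at h2
    omega
  obtain ⟨T, hT, hTcard⟩ := exists_subset_card_eq (show 3 ≤ W.card by omega)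
  exact h3 T ⟨hclique.subset (coe_subset.2 hT), hTcard⟩

private lemma step {H : SimpleGraph V} [DecidableRel H.Adj] [DecidableEq V]
    (h3 : H.CliqueFree 3) {k b : ℕ} {W : Finset V}
    (hW : IndepBdd H (k + 1) W)
    (hrec : ∀ U : Finset V, IndepBdd H k U → U.card ≤ b) {v : V} (hv : v ∈ W) :
    W.card ≤ 1 + (W.filter (H.Adj v)).card + b ∧ (W.filter (H.Adj v)).card ≤ k + 1 := by
  have hs := card_split (H := H) hv
  have hU := hrec _ (indepBdd_nonnbr hW hv)
  exact ⟨by omega, deg_le h3 hW v⟩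

private lemma bound2 {H : SimpleGraph V} (h3 : H.CliqueFree 3) {W : Finset V}
    (hW : IndepBdd H 2 W) : W.card ≤ 5 := by
  classical
  rcases W.eq_empty_or_nonempty with rfl | ⟨v, hv⟩
  · simp
  have := step h3 hW (fun U hU => bound1 h3 hU) hv
  omega

private lemma bound3 {H : SimpleGraph V} (h3 : H.CliqueFree 3) {W : Finset V}
    (hW : IndepBdd H 3 W) : W.card ≤ 8 := by
  classical
  by_contra h
  push_neg at h
  have h9 : W.card = 9 := by
    rcases W.eq_empty_or_nonempty with rfl | ⟨v, hv⟩
    · simp at h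
    have := step h3 hW (fun U hU => bound2 h3 hU) hv
    omega
  -- each vertex of W has exactly 3 neighbors inside W
  have hdeg : ∀ v ∈ W, (W.filter (H.Adj v)).card = 3 := by
    intro v hv
    have hs := step h3 hW (fun U hU => bound2 h3 hU) hv
    omega
  -- parity contradiction via the restricted graph
  let H' : SimpleGraph V :=
    { Adj := fun u w => u ∈ W ∧ w ∈ W ∧ H.Adj u w
      symm := ⟨fun u w h => ⟨h.2.1, h.1, h.2.2.symm⟩⟩
      loopless := ⟨fun u h => H.irrefl h.2.2⟩ }
  have heven := SimpleGraph.even_card_odd_degree_vertices H'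
  have hnb : ∀ v, H'.neighborFinset v = if v ∈ W then W.filter (H.Adj v) else ∅ := by
    intro v
    ext u
    by_cases hv : v ∈ W <;>
      simp [SimpleGraph.mem_neighborFinset, H', hv, and_comm]
  have hfil : (univ.filter fun v => Odd (H'.degree v)) = W := by
    ext v
    simp only [mem_filter, mem_univ, true_and, SimpleGraph.degree, hnb]
    by_cases hv : v ∈ W
    · simp only [hv, if_true, hdeg v hv]
      constructor <;> intro <;> decide
    · simp [hv]
  rw [hfil, h9] at heven
  exact absurd heven (by decide)

private lemma bound4 {H : SimpleGraph V} (h3 : H.CliqueFree 3) {W : Finset V}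
    (hW : IndepBdd H 4 W) : W.card ≤ 13 := by
  classical
  rcases W.eq_empty_or_nonempty with rfl | ⟨v, hv⟩
  · simp
  have := step h3 hW (fun U hU => bound3 h3 hU) hv
  omega

private lemma ramsey (V : Type) [Fintype V] (G : SimpleGraph V) (h : 13 < Fintype.card V) :
    (∃ S : Finset V, G.IsNClique 5 S) ∨ (∃ S : Finset V, Gᶜ.IsNClique 3 S) := by
  classical
  by_contra hc
  push_neg at hc
  obtain ⟨h5, h3⟩ := hc
  have h3' : (Gᶜ).CliqueFree 3 := fun S hS => h3 S hS
  have hbdd : IndepBdd (Gᶜ) 4 (univ : Finset V) := by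
    intro S _ hS
    rw [compl_compl] at hS
    by_contra hcard
    push_neg at hcard
    obtain ⟨T, hT, hTc⟩ := exists_subset_card_eq (show 5 ≤ S.card by omega)
    exact h5 T ⟨hS.subset (coe_subset.2 hT), hTc⟩
  have := bound4 h3' hbdd
  rw [card_univ] at this
  omega

end Ramsey


/-- Every simple graph with more than `13` vertices contains a clique of size `5` or an
independent set of size `3`; consequently every `(4,2)`-arrangement has at most `13`
segments. -/
theorem ramsey_bound_and_max_42_arrangement :
    (∀ (V : Type) [Fintype V] (G : SimpleGraph V), 13 < Fintype.card V →
      (∃ S : Finset V, G.IsNClique 5 S) ∨ (∃ S : Finset V, Gᶜ.IsNClique 3 S)) ∧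
    ∀ M : Finset Seg, IsKLArrangement M 4 2 → M.card ≤ 13 := by
  constructor
  · intro V _ G h
    exact ramsey V G h
  · intro M hM
    by_contra h
    push_neg at h
    have hcard : 13 < Fintype.card {s : Seg // s ∈ M} := by
      simpa [Fintype.card_coe] using h
    rcases ramsey _ (interGraph M) hcard with ⟨S, hS⟩ | ⟨S, hS⟩
    · have hle := hM.2.1 (S.map (Function.Embedding.subtype _)) ?_ ?_
      · rw [card_map, hS.2] at hle
        omega
      · intro s hs
        obtain ⟨a, _, rfl⟩ := mem_map.1 hs
        exact a.2
      · intro s hs t ht hst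
        obtain ⟨a, ha, rfl⟩ := mem_map.1 hs
        obtain ⟨b, hb, rfl⟩ := mem_map.1 ht
        have hab : a ≠ b := fun e => hst (congrArg _ e)
        exact (hS.1 (mem_coe.2 ha) (mem_coe.2 hb) hab).2
    · have hle := hM.2.2 (S.map (Function.Embedding.subtype _)) ?_ ?_
      · rw [card_map, hS.2] at hle
        omega
      · intro s hs
        obtain ⟨a, _, rfl⟩ := mem_map.1 hs
        exact a.2
      · intro s hs t ht hst
        obtain ⟨a, ha, rfl⟩ := mem_map.1 hs
        obtain ⟨b, hb, rfl⟩ := mem_map.1 ht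
        have hab : a ≠ b := fun e => hst (congrArg _ e)
        have := (hS.1 (mem_coe.2 ha) (mem_coe.2 hb) hab).2
        simp only [SimpleGraph.compl_adj, interGraph] at this
        tauto
end
end
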